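/- Let X be a set, E a class of pairs (ξ, x) where ξ is a net in X and x ∈ X, and let E(X) be the topology on X in which U is open iff for every (ξ, x) ∈ E with x ∈ U, the net ξ is eventually in U. Then for every topological space Y, a map f : (X, E(X)) → Y is continuous if and only if for every (ξ, x) ∈ E, the net f ∘ ξ converges to f(x) in Y. -/
import Mathlib


/-- A net in `X`: a function from a (nonempty, directed) preordered index type to `X`. -/
structure PNet (X : Type) : Type 1 where
  ι : Type
  le : ι → ι → Prop
  refl : ∀ i, le i i
  trans : ∀ i j k, le i j → le j k → le i k
  nonempty : Nonempty ι
  directed : ∀ i j, ∃ k, le i k ∧ le j k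
  toFun : ι → X

/-- A net is eventually in a set. -/
def PNet.Eventually {X : Type} (n : PNet X) (U : Set X) : Prop :=
  ∃ j, ∀ k, n.le j k → n.toFun k ∈ U

/-- Convergence of a net in a topological space. -/
def PNet.ConvTo {X : Type} [TopologicalSpace X] (n : PNet X) (x : X) : Prop :=
  ∀ U : Set X, IsOpen U → x ∈ U → n.Eventually U

/-- The image of a net under a map. -/
def PNet.map {X Y : Type} (f : X → Y) (n : PNet X) : PNet Y :=
  ⟨n.ι, n.le, n.refl, n.trans, n.nonempty, n.directed, fun i => f (n.toFun i)⟩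

/-- Let `E(X)` be the topology determined by the convergence class `E`
(`U` open iff for every `(ξ, x) ∈ E` with `x ∈ U`, `ξ` is eventually in `U`).
Then `f : (X, E(X)) → Y` is continuous iff for every `(ξ, x) ∈ E`,
the net `f ∘ ξ` converges to `f x` in `Y`. -/
theorem stmt2 {X Y : Type} [TopologicalSpace Y]
    (E : Set (PNet X × X)) (T : TopologicalSpace X)
    (hT : ∀ U : Set X, T.IsOpen U ↔ ∀ p ∈ E, p.2 ∈ U → p.1.Eventually U)
    (f : X → Y) :
    @Continuous X Y T _ f ↔ ∀ p ∈ E, (PNet.map f p.1).ConvTo (f p.2) := by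
  constructor
  · intro hf p hp U hU hx
    have hpre : T.IsOpen (f ⁻¹' U) := (continuous_def.mp hf) U hU
    obtain ⟨j, hj⟩ := (hT _).mp hpre p hp hx
    exact ⟨j, hj⟩
  · intro h
    rw [continuous_def]
    intro U hU
    refine (hT _).mpr ?_
    intro p hp hx
    obtain ⟨j, hj⟩ := h p hp U hU hx
    exact ⟨j, hj⟩
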